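/- Let q ≥ 2 and n ≥ 1 be integers, and suppose S = (s_i) is an orientable sequence of order n and period m over ℤ_q whose weight w_q(S) modulo q has additive order q in ℤ_q. Suppose t > 0 is the length of a maximal run of 0 in S. Then every T ∈ D^{-1}(S) has period qm, and for each a ∈ ℤ_q, T contains a maximal run a^{t+1}. -/

import Mathlib

namespace OSeq

variable {q : ℕ}

/-- The `n`-tuple (window) of the sequence `s` at position `i`. -/
def window (s : ℤ → ZMod q) (n : ℕ) (i : ℤ) : Fin n → ZMod q :=
  fun k => s (i + (k : ℕ))

/-- The reverse of an `n`-tuple. -/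
def tupRev {n : ℕ} (u : Fin n → ZMod q) : Fin n → ZMod q :=
  fun k => u k.rev

/-- `m` is the (least) period of the periodic sequence `s`. -/
def IsPeriod (s : ℤ → ZMod q) (m : ℕ) : Prop :=
  0 < m ∧ (∀ i : ℤ, s (i + (m : ℤ)) = s i) ∧
    ∀ m' : ℕ, 0 < m' → (∀ i : ℤ, s (i + (m' : ℤ)) = s i) → m ≤ m'

/-- `s` is an `n`-window sequence of period `m`. -/
def IsNWindowSeq (s : ℤ → ZMod q) (n m : ℕ) : Prop :=
  IsPeriod s m ∧ ∀ i j : ℤ, window s n i = window s n j → i ≡ j [ZMOD (m : ℤ)]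

/-- `s` is an orientable sequence of order `n` and period `m`. -/
def IsOS (s : ℤ → ZMod q) (n m : ℕ) : Prop :=
  IsNWindowSeq s n m ∧ ∀ i j : ℤ, window s n i ≠ tupRev (window s n j)

/-- `s` is a negative orientable sequence of order `n` and period `m`. -/
def IsNOS (s : ℤ → ZMod q) (n m : ℕ) : Prop :=
  IsNWindowSeq s n m ∧ ∀ i j : ℤ, window s n i ≠ - tupRev (window s n j)

/-- `s` is a special orientable sequence of order `n` and period `m`:
orientable and also negative orientable. -/
def IsSpecialOS (s : ℤ → ZMod q) (n m : ℕ) : Prop :=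
  IsOS s n m ∧ ∀ i j : ℤ, window s n i ≠ - tupRev (window s n j)

/-- The weight modulo `q` of one period of `s`. -/
def wq (s : ℤ → ZMod q) (m : ℕ) : ZMod q :=
  ∑ i ∈ Finset.range m, s (i : ℤ)

/-- The alternating sign weight modulo `q` of one period of `s`. -/
def wqA (s : ℤ → ZMod q) (m : ℕ) : ZMod q :=
  ∑ i ∈ Finset.range m, (-1 : ZMod q) ^ (m - 1 - i) * s (i : ℤ)

/-- The Lempel homomorphism `D` on sequences. -/
def D (t : ℤ → ZMod q) : ℤ → ZMod q := fun j => t (j + 1) - t j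

/-- The homomorphism `A` on sequences. -/
def A (t : ℤ → ZMod q) : ℤ → ZMod q := fun j => t (j + 1) + t j

/-- Shift of a sequence by `c`. -/
def shift (t : ℤ → ZMod q) (c : ℤ) : ℤ → ZMod q := fun i => t (i + c)

/-- `t'` is a translate of `t`. -/
def IsTranslate (t t' : ℤ → ZMod q) : Prop := ∃ c : ZMod q, ∀ i : ℤ, t' i = t i + c

/-- `t'` is an alternating sign translate of `t`. -/
def IsAltTranslate (t t' : ℤ → ZMod q) : Prop :=
  ∃ c : ZMod q, ∀ i : ℤ, t' i = t i + (if i % 2 = 0 then c else -c)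

/-- Two sequences are (`n`-window) disjoint. -/
def WindowDisjoint (n : ℕ) (s t : ℤ → ZMod q) : Prop :=
  ∀ i j : ℤ, window s n i ≠ window t n j

/-- Orientable-disjoint. -/
def ODisjoint (n : ℕ) (s t : ℤ → ZMod q) : Prop :=
  WindowDisjoint n s t ∧ ∀ i j : ℤ, window s n i ≠ tupRev (window t n j)

/-- Negative orientable-disjoint (no-disjoint). -/
def NODisjoint (n : ℕ) (s t : ℤ → ZMod q) : Prop :=
  WindowDisjoint n s t ∧ ∀ i j : ℤ, window s n i ≠ - tupRev (window t n j)

/-- Special-orientable-disjoint. -/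
def SpecialODisjoint (n : ℕ) (s t : ℤ → ZMod q) : Prop :=
  ODisjoint n s t ∧ ∀ i j : ℤ, window s n i ≠ - tupRev (window t n j)

/-- The string `a^t` appears in `s`. -/
def HasString (s : ℤ → ZMod q) (a : ZMod q) (t : ℕ) : Prop :=
  ∃ j : ℤ, ∀ k : ℕ, k < t → s (j + (k : ℤ)) = a

/-- There is a run `a^t` of `a` in `s` starting at position `j`. -/
def IsRunAt (s : ℤ → ZMod q) (a : ZMod q) (j : ℤ) (t : ℕ) : Prop :=
  (∀ k : ℕ, k < t → s (j + (k : ℤ)) = a) ∧ s (j - 1) ≠ a ∧ s (j + (t : ℤ)) ≠ a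

/-- `a^t` is a maximal run of `a` in `s`: the string `a^t` appears and every
string `a^{t'}` appearing in `s` has `t' ≤ t`. -/
def IsMaxRun (s : ℤ → ZMod q) (a : ZMod q) (t : ℕ) : Prop :=
  HasString s a t ∧ ∀ t' : ℕ, HasString s a t' → t' ≤ t

/-- `k`-th entry of the alternating string `a, -a, a, -a, ...`. -/
def altVal (a : ZMod q) (k : ℕ) : ZMod q := if k % 2 = 0 then a else -a

/-- The signed string `ạ^t` (alternating `a, -a, ...`) appears in `s`. -/
def HasSignedString (s : ℤ → ZMod q) (a : ZMod q) (t : ℕ) : Prop :=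
  ∃ j : ℤ, ∀ k : ℕ, k < t → s (j + (k : ℤ)) = altVal a k

/-- There is a signed run `ạ^t` of `a` in `s` starting at position `j`. -/
def IsSignedRunAt (s : ℤ → ZMod q) (a : ZMod q) (j : ℤ) (t : ℕ) : Prop :=
  (∀ k : ℕ, k < t → s (j + (k : ℤ)) = altVal a k) ∧
    s (j - 1) ≠ -a ∧ s (j + (t : ℤ)) ≠ altVal a t

/-- `ạ^t` is a maximal signed run of `a` in `s`. -/
def IsMaxSignedRun (s : ℤ → ZMod q) (a : ZMod q) (t : ℕ) : Prop :=
  HasSignedString s a t ∧ ∀ t' : ℕ, HasSignedString s a t' → t' ≤ t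

/-- The sequence obtained from the ring sequence `[s_0,...,s_{m-1}]` of `s` by
inserting one extra symbol `a` at ring position `r`, i.e. with ring sequence
`[s_0,...,s_{r-1}, a, s_r, ..., s_{m-1}]` of length `m+1`. -/
def insert1 (s : ℤ → ZMod q) (m r : ℕ) (a : ZMod q) : ℤ → ZMod q :=
  fun j =>
    let j' := (j % ((m : ℤ) + 1)).toNat
    if j' < r then s (j' : ℤ) else if j' = r then a else s ((j' : ℤ) - 1)

/-- The sequence obtained from the ring sequence `[s_0,...,s_{m-1}]` of `s` by
inserting the two symbols `a, -a` at ring position `r`, i.e. with ring sequence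
`[s_0,...,s_{r-1}, a, -a, s_r, ..., s_{m-1}]` of length `m+2`. -/
def insert2 (s : ℤ → ZMod q) (m r : ℕ) (a : ZMod q) : ℤ → ZMod q :=
  fun j =>
    let j' := (j % ((m : ℤ) + 2)).toNat
    if j' < r then s (j' : ℤ)
    else if j' = r then a
    else if j' = r + 1 then -a
    else s ((j' : ℤ) - 2)

/-- The operation `E_a` (with the convention `E_0(S) = S`). -/
def Emod (s : ℤ → ZMod q) (m r : ℕ) (a : ZMod q) : ℤ → ZMod q :=
  if a = 0 then s else insert1 s m r a

/-- A sequence is good (for order `n`) if every run of `0` has length at most `n-2`. -/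
def GoodSeq (s : ℤ → ZMod q) (n : ℕ) : Prop :=
  ∀ t : ℕ, HasString s 0 t → t ≤ n - 2

/-- A tuple is uniform if it is constant. -/
def Uniform {n : ℕ} (u : Fin n → ZMod q) : Prop := ∃ c : ZMod q, ∀ i, u i = c

/-- A tuple is symmetric if it equals its own reverse. -/
def Symm {n : ℕ} (u : Fin n → ZMod q) : Prop := ∀ i : Fin n, u i = u i.rev

/-- An `n`-tuple is `m`-symmetric (`m ≤ n`) if `u_i = u_{m-1-i}` for `0 ≤ i ≤ m-1`. -/
def MSymm {n : ℕ} (u : Fin n → ZMod q) (m : ℕ) (hm : m ≤ n) : Prop :=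
  ∀ i : Fin m, u (Fin.castLE hm i) = u (Fin.castLE hm i.rev)

/-- An `n`-tuple (`n ≥ 2`) is alternating. -/
def Alternating {n : ℕ} (hn : 2 ≤ n) (u : Fin n → ZMod q) : Prop :=
  u ⟨0, by omega⟩ ≠ u ⟨1, by omega⟩ ∧
    ∀ i : Fin n, u i = if (i : ℕ) % 2 = 0 then u ⟨0, by omega⟩ else u ⟨1, by omega⟩

/-- `L_n(v)`: the set of `n`-tuples whose first `n-r` entries agree with the
`(n-r)`-tuple `v`. -/
def Lset (n r : ℕ) (v : Fin (n - r) → ZMod q) : Set (Fin n → ZMod q) :=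
  {u | ∀ i : Fin (n - r), u (Fin.castLE (Nat.sub_le n r) i) = v i}

/-- The `n`-tuple `u` appears in the sequence `s`. -/
def AppearsIn (s : ℤ → ZMod q) (n : ℕ) (u : Fin n → ZMod q) : Prop :=
  ∃ i : ℤ, window s n i = u

end OSeq

open OSeq

namespace OSeq
variable {q : ℕ}

lemma tele (T : ℤ → ZMod q) (i : ℤ) (k : ℕ) :
    T (i + (k : ℤ)) = T i + ∑ r ∈ Finset.range k, (D T) (i + (r : ℤ)) := by
  induction k with
  | zero => simp
  | succ k ih =>
    have hc : (i + ((k + 1 : ℕ) : ℤ)) = (i + (k : ℤ)) + 1 := by push_cast; ring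
    rw [Finset.sum_range_succ, ← add_assoc, ← ih, hc]
    simp [D]

lemma sum_shift {s : ℤ → ZMod q} {m : ℕ} (hper : ∀ i : ℤ, s (i + (m : ℤ)) = s i)
    (i : ℤ) : ∑ r ∈ Finset.range m, s (i + (r : ℤ)) = wq s m := by
  have key : ∀ i : ℤ, ∑ r ∈ Finset.range m, s ((i + 1) + (r : ℤ))
      = ∑ r ∈ Finset.range m, s (i + (r : ℤ)) := by
    intro i
    have h1 := Finset.sum_range_succ (fun r : ℕ => s (i + (r : ℤ))) m
    have h2 := Finset.sum_range_succ' (fun r : ℕ => s (i + (r : ℤ))) m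
    have h3 : ∑ r ∈ Finset.range m, s ((i + 1) + (r : ℤ))
        = ∑ r ∈ Finset.range m, s (i + ((r + 1 : ℕ) : ℤ)) := by
      apply Finset.sum_congr rfl; intro x _; congr 1; push_cast; ring
    rw [h3]
    have h4 := h1.symm.trans h2
    simp only [Nat.cast_zero, add_zero] at h4
    rw [hper i] at h4
    exact (add_right_cancel h4).symm
  have main : ∀ i : ℤ, ∑ r ∈ Finset.range m, s (i + (r : ℤ))
      = ∑ r ∈ Finset.range m, s ((0 : ℤ) + (r : ℤ)) := by
    intro i
    induction i using Int.induction_on with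
    | zero => rfl
    | succ k ih => rw [key, ih]
    | pred k ih =>
      have h5 := key (-(k : ℤ) - 1)
      rw [show -(k : ℤ) - 1 + 1 = -(k : ℤ) from by ring] at h5
      rw [← h5, ih]
  rw [main i, wq]
  apply Finset.sum_congr rfl; intro x _; simp

lemma period_pow {s : ℤ → ZMod q} {m : ℕ} (hper : ∀ i : ℤ, s (i + (m : ℤ)) = s i)
    (k : ℕ) (i : ℤ) : s (i + ((k * m : ℕ) : ℤ)) = s i := by
  induction k with
  | zero => simp
  | succ k ih =>
    have hc : (i + (((k + 1) * m : ℕ) : ℤ)) = (i + ((k * m : ℕ) : ℤ)) + (m : ℤ) := by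
      push_cast; ring
    rw [hc, hper, ih]

lemma least_dvd {s : ℤ → ZMod q} {m : ℕ} (hP : IsPeriod s m) (m' : ℕ)
    (h' : ∀ i : ℤ, s (i + (m' : ℤ)) = s i) : m ∣ m' := by
  obtain ⟨hm0, hper, hmin⟩ := hP
  set r := m' % m with hr
  have hrm : r < m := Nat.mod_lt _ hm0
  have hperr : ∀ i : ℤ, s (i + (r : ℤ)) = s i := by
    intro i
    have h1 := period_pow hper (m' / m) (i + (r : ℤ))
    have hnat : (m' / m) * m + r = m' := by
      rw [hr, mul_comm]; exact Nat.div_add_mod m' m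
    have hcast : (((m' / m) * m : ℕ) : ℤ) + (r : ℤ) = (m' : ℤ) := by exact_mod_cast hnat
    have hc : (i + (r : ℤ)) + (((m' / m) * m : ℕ) : ℤ) = i + (m' : ℤ) := by
      rw [← hcast]; ring
    rw [hc, h' i] at h1
    exact h1.symm
  rcases Nat.eq_zero_or_pos r with h0 | hpos
  · exact Nat.dvd_of_mod_eq_zero h0
  · exact absurd (hmin r hpos hperr) (by omega)

end OSeq
/-- If `S` is an orientable sequence of order `n` and period `m` over `ℤ_q` whose
weight `w_q(S)` has additive order `q`, and `t > 0` is the length of a maximal run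
of `0` in `S`, then every `T ∈ D⁻¹(S)` has period `qm` and contains a maximal run
`a^{t+1}` for each `a ∈ ℤ_q`. -/
theorem Dinv_period_and_maximal_runs {q n m t : ℕ} (hq : 2 ≤ q) (hn : 1 ≤ n)
    (s : ℤ → ZMod q) (hS : IsOS s n m) (hw : addOrderOf (wq s m) = q)
    (ht : 0 < t) (hrun : IsMaxRun s 0 t) :
    ∀ T : ℤ → ZMod q, D T = s →
      IsPeriod T (q * m) ∧ ∀ a : ZMod q, IsMaxRun T a (t + 1) := by
  haveI : NeZero q := ⟨by omega⟩
  intro T hT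
  obtain ⟨⟨hP, _⟩, _⟩ := hS
  have hm0 : 0 < m := hP.1
  have hper : ∀ i : ℤ, s (i + (m : ℤ)) = s i := hP.2.1
  have hTm : ∀ i : ℤ, T (i + (m : ℤ)) = T i + wq s m := by
    intro i
    rw [OSeq.tele T i m, hT, OSeq.sum_shift hper i]
  have hTkm : ∀ (k : ℕ) (i : ℤ), T (i + ((k * m : ℕ) : ℤ)) = T i + k • wq s m := by
    intro k
    induction k with
    | zero => intro i; simp
    | succ k ih =>
      intro i
      have hc : (i + (((k + 1) * m : ℕ) : ℤ)) = (i + ((k * m : ℕ) : ℤ)) + (m : ℤ) := by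
        push_cast; ring
      rw [hc, hTm, ih, succ_nsmul, add_assoc]
  have hgen : ∀ b : ZMod q, ∃ k : ℕ, k • wq s m = b := by
    intro b
    have hinj : Function.Injective (fun x : ZMod q => x * wq s m) := by
      intro x y hxy
      simp only at hxy
      have hz : (x - y) * wq s m = 0 := by rw [sub_mul, hxy, sub_self]
      have hv : (x - y).val • wq s m = 0 := by
        rw [nsmul_eq_mul, ZMod.natCast_val, ZMod.cast_id, hz]
      have hdvd : q ∣ (x - y).val := by
        have h := addOrderOf_dvd_of_nsmul_eq_zero hv; rwa [hw] at h
      have h0 : (x - y).val = 0 := Nat.eq_zero_of_dvd_of_lt hdvd (ZMod.val_lt _)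
      have : x - y = 0 := (ZMod.val_eq_zero _).mp h0
      exact sub_eq_zero.mp this
    obtain ⟨x, hx⟩ := Finite.injective_iff_surjective.mp hinj b
    refine ⟨x.val, ?_⟩
    rw [nsmul_eq_mul, ZMod.natCast_val, ZMod.cast_id]
    exact hx
  constructor
  · refine ⟨Nat.mul_pos (by omega) hm0, ?_, ?_⟩
    · intro i
      have hq0 : (q : ℕ) • wq s m = 0 := by
        have h := addOrderOf_nsmul_eq_zero (wq s m); rwa [hw] at h
      rw [hTkm q i, hq0, add_zero]
    · intro m' hm' hperT
      have hsper : ∀ i : ℤ, s (i + (m' : ℤ)) = s i := by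
        intro i
        rw [← hT]
        show T ((i + (m' : ℤ)) + 1) - T (i + (m' : ℤ)) = T (i + 1) - T i
        rw [show (i + (m' : ℤ)) + 1 = (i + 1) + (m' : ℤ) from by ring, hperT, hperT]
      obtain ⟨d, hd⟩ := OSeq.least_dvd hP m' hsper
      have hd0 : 0 < d := by
        rcases Nat.eq_zero_or_pos d with h | h
        · subst h; simp at hd; omega
        · exact h
      have hdw : d • wq s m = 0 := by
        have h1 := hTkm d 0
        rw [show ((d * m : ℕ) : ℤ) = (m' : ℤ) from by rw [hd]; push_cast; ring,
          hperT 0] at h1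
        exact (left_eq_add.mp h1)
      have hqd : q ∣ d := by
        have h := addOrderOf_dvd_of_nsmul_eq_zero hdw; rwa [hw] at h
      calc q * m ≤ d * m := Nat.mul_le_mul_right m (Nat.le_of_dvd hd0 hqd)
        _ = m' := by rw [hd, mul_comm]
  · intro a
    obtain ⟨⟨j, hj⟩, hmax⟩ := hrun
    have hT0 : ∀ k : ℕ, k ≤ t → T (j + (k : ℤ)) = T j := by
      intro k hk
      rw [OSeq.tele T j k, hT]
      have : ∑ r ∈ Finset.range k, s (j + (r : ℤ)) = 0 :=
        Finset.sum_eq_zero (fun r hr =>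
          hj r (lt_of_lt_of_le (Finset.mem_range.mp hr) hk))
      rw [this, add_zero]
    obtain ⟨k0, hk0⟩ := hgen (a - T j)
    constructor
    · refine ⟨j + ((k0 * m : ℕ) : ℤ), fun k hk => ?_⟩
      have hc : j + ((k0 * m : ℕ) : ℤ) + (k : ℤ) = (j + (k : ℤ)) + ((k0 * m : ℕ) : ℤ) := by
        ring
      rw [hc, hTkm k0 (j + (k : ℤ)), hT0 k (by omega), hk0]
      ring
    · rintro t' ⟨j', hj'⟩
      have hs0 : HasString s 0 (t' - 1) := by
        refine ⟨j', fun k hk => ?_⟩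
        rw [← hT]
        show T (j' + (k : ℤ) + 1) - T (j' + (k : ℤ)) = 0
        have h1 := hj' k (by omega)
        have h2 := hj' (k + 1) (by omega)
        rw [show j' + (k : ℤ) + 1 = j' + ((k + 1 : ℕ) : ℤ) from by push_cast; ring,
          h2, h1, sub_self]
      have := hmax _ hs0
      omega
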